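/- In the unweighted case p_{ij} = 1/2 for all i ≠ j, for each label i ∈ {1,…,n} define the function f_i on permutations by f_i(x) := cos((2·pos_i(x) − 1)π/(2n)), where pos_i(x) is the position r with x_r = i. Then f_i, viewed as a vector indexed by permutations, satisfies K f_i = (1 − (1 − cos(π/n))/(n − 1)) f_i; that is, f_i is an eigenvector of K with eigenvalue 1 − (1 − cos(π/n))/(n − 1). -/

import Mathlib

open Finset

/-- Off-diagonal entries of the adjacent-transposition chain: `Koff n p x y = p_{ji}/(n-1)`
if `y` is obtained from `x` by swapping the entries in (0-based) positions `r-1` and `r`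
for some `1 ≤ r ≤ n-1`, and `0` otherwise. Here `x r` is the entry in position `r`. -/
noncomputable def Koff (n : ℕ) (p : Fin n → Fin n → ℝ)
    (x y : Equiv.Perm (Fin n)) : ℝ :=
  ∑ r : Fin n,
    if 1 ≤ (r : ℕ) ∧
        y = x * Equiv.swap (⟨(r : ℕ) - 1, Nat.lt_of_le_of_lt (Nat.sub_le _ _) r.isLt⟩ : Fin n) r
    then p (x r) (x ⟨(r : ℕ) - 1, Nat.lt_of_le_of_lt (Nat.sub_le _ _) r.isLt⟩) / ((n : ℝ) - 1)
    else 0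

/-- The transition matrix `K` of the adjacent-transposition chain on permutations. -/
noncomputable def Kmat (n : ℕ) (p : Fin n → Fin n → ℝ) :
    Matrix (Equiv.Perm (Fin n)) (Equiv.Perm (Fin n)) ℝ :=
  Matrix.of fun x y =>
    if x = y then 1 - ∑ z ∈ Finset.univ.erase x, Koff n p x z
    else Koff n p x y

/-- Unnormalized stationary weight `∏_{r<s} p_{x_r,x_s}`. -/
noncomputable def piUn (n : ℕ) (p : Fin n → Fin n → ℝ) (x : Equiv.Perm (Fin n)) : ℝ :=
  ∏ rs ∈ Finset.univ.filter (fun rs : Fin n × Fin n => rs.1 < rs.2), p (x rs.1) (x rs.2)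

/-- The stationary distribution `π`. -/
noncomputable def piDist (n : ℕ) (p : Fin n → Fin n → ℝ) (x : Equiv.Perm (Fin n)) : ℝ :=
  (∑ y : Equiv.Perm (Fin n), piUn n p y)⁻¹ * piUn n p x

/-- The function `f_i` on permutations: `f_i(x) = cos((2·pos_i(x) - 1)π/(2n))`, where
`pos_i(x) ∈ {1, ..., n}` is the (1-based) position of label `i` in `x`. -/
noncomputable def fvec (n : ℕ) (i : Fin n) (x : Equiv.Perm (Fin n)) : ℝ :=
  Real.cos ((2 * (((x.symm i : ℕ) + 1 : ℕ) : ℝ) - 1) * Real.pi / (2 * n))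


noncomputable def Gf (n : ℕ) (m : ℤ) : ℝ :=
  Real.cos ((2 * m + 1) * Real.pi / (2 * n))

lemma Gf_rec (n : ℕ) (hn : n ≠ 0) (m : ℤ) :
    Gf n (m - 1) + Gf n (m + 1) = 2 * Real.cos (Real.pi / n) * Gf n m := by
  have hn' : (n : ℝ) ≠ 0 := Nat.cast_ne_zero.mpr hn
  unfold Gf
  push_cast
  have ha : (2 * ((m : ℝ) - 1) + 1) * Real.pi / (2 * n)
      = (2 * (m : ℝ) + 1) * Real.pi / (2 * n) - Real.pi / n := by
    field_simp; ring
  have hb : (2 * ((m : ℝ) + 1) + 1) * Real.pi / (2 * n)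
      = (2 * (m : ℝ) + 1) * Real.pi / (2 * n) + Real.pi / n := by
    field_simp; ring
  rw [ha, hb, Real.cos_sub, Real.cos_add]
  ring

lemma Gf_neg (n : ℕ) : Gf n (-1) = Gf n 0 := by
  unfold Gf
  norm_num [neg_div, Real.cos_neg]

lemma Gf_top (n : ℕ) (hn : n ≠ 0) : Gf n (n : ℤ) = Gf n ((n : ℤ) - 1) := by
  have hn' : (n : ℝ) ≠ 0 := Nat.cast_ne_zero.mpr hn
  unfold Gf
  push_cast
  have ha : (2 * (n : ℝ) + 1) * Real.pi / (2 * n)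
      = Real.pi + Real.pi / (2 * n) := by field_simp
  have hb : (2 * ((n : ℝ) - 1) + 1) * Real.pi / (2 * n)
      = Real.pi - Real.pi / (2 * n) := by field_simp; ring
  rw [ha, hb, Real.cos_add, Real.cos_sub]
  simp

lemma sum_ite_val (n : ℕ) (m : ℕ) (hm : m < n) (C : ℝ) :
    ∑ r : Fin n, (if (r : ℕ) = m then C else 0) = C := by
  classical
  have : ∀ r : Fin n, ((r : ℕ) = m) = (r = ⟨m, hm⟩) := by
    intro r; simp [Fin.ext_iff]
  simp only [this]
  simp

lemma key_sum (n : ℕ) (hn : 2 ≤ n) (k : Fin n) :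
    ∑ r : Fin n, (if 1 ≤ (r : ℕ) then
        Gf n (((Equiv.swap (⟨(r : ℕ) - 1, Nat.lt_of_le_of_lt (Nat.sub_le _ _) r.isLt⟩ : Fin n) r k : Fin n) : ℕ) : ℤ)
          - Gf n ((k : ℕ) : ℤ)
      else 0)
    = (2 * Real.cos (Real.pi / n) - 2) * Gf n ((k : ℕ) : ℤ) := by
  classical
  have hn0 : n ≠ 0 := by omega
  have hpt : ∀ r : Fin n, (if 1 ≤ (r : ℕ) then
        Gf n (((Equiv.swap (⟨(r : ℕ) - 1, Nat.lt_of_le_of_lt (Nat.sub_le _ _) r.isLt⟩ : Fin n) r k : Fin n) : ℕ) : ℤ)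
          - Gf n ((k : ℕ) : ℤ)
      else 0)
      = (if (r : ℕ) = (k : ℕ) then Gf n (((k : ℕ) : ℤ) - 1) - Gf n ((k : ℕ) : ℤ) else 0)
        + (if (r : ℕ) = (k : ℕ) + 1 then Gf n (((k : ℕ) : ℤ) + 1) - Gf n ((k : ℕ) : ℤ) else 0) := by
    intro r
    set r' : Fin n := ⟨(r : ℕ) - 1, Nat.lt_of_le_of_lt (Nat.sub_le _ _) r.isLt⟩ with hr'
    by_cases h1 : (r : ℕ) = (k : ℕ)
    · have hrk : r = k := Fin.ext h1
      by_cases hk : 1 ≤ (k : ℕ)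
      · have hswap : Equiv.swap r' r k = r' := by rw [← hrk]; exact Equiv.swap_apply_right r' r
        rw [hswap, if_pos h1, if_pos (h1 ▸ hk), if_neg (by omega)]
        have : ((r' : ℕ) : ℤ) = ((k : ℕ) : ℤ) - 1 := by
          simp only [hr']; omega
        rw [this, add_zero]
      · have hk0 : (k : ℕ) = 0 := by omega
        rw [if_neg (by omega), if_pos h1, if_neg (by omega)]
        have h2 : ((k : ℕ) : ℤ) - 1 = -1 := by omega
        have h3 : ((k : ℕ) : ℤ) = 0 := by omega
        rw [h2, h3, Gf_neg, add_zero, sub_self]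
    · by_cases h2 : (r : ℕ) = (k : ℕ) + 1
      · have hkr' : k = r' := by apply Fin.ext; simp only [hr']; omega
        have hswap : Equiv.swap r' r k = r := by rw [hkr']; exact Equiv.swap_apply_left r' r
        rw [hswap, if_pos (by omega), if_neg h1, if_pos h2]
        have : ((r : ℕ) : ℤ) = ((k : ℕ) : ℤ) + 1 := by omega
        rw [this, zero_add]
      · by_cases hr1 : 1 ≤ (r : ℕ)
        · have hswap : Equiv.swap r' r k = k := by
            apply Equiv.swap_apply_of_ne_of_ne
            · intro h; apply h2; rw [h] at h2 ⊢; simp only [hr'] at *; omega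
            · intro h; exact h1 (by rw [h])
          rw [hswap, if_pos hr1, if_neg h1, if_neg h2, sub_self, add_zero]
        · rw [if_neg hr1, if_neg h1, if_neg h2, add_zero]
  rw [Finset.sum_congr rfl (fun r _ => hpt r), Finset.sum_add_distrib]
  rw [sum_ite_val n (k : ℕ) k.isLt]
  have hS2 : ∑ r : Fin n, (if (r : ℕ) = (k : ℕ) + 1 then Gf n (((k : ℕ) : ℤ) + 1) - Gf n ((k : ℕ) : ℤ) else 0)
      = Gf n (((k : ℕ) : ℤ) + 1) - Gf n ((k : ℕ) : ℤ) := by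
    by_cases hk2 : (k : ℕ) + 1 < n
    · exact sum_ite_val n ((k : ℕ) + 1) hk2 _
    · have hke : (k : ℕ) = n - 1 := by omega
      have hz : ∑ r : Fin n, (if (r : ℕ) = (k : ℕ) + 1 then Gf n (((k : ℕ) : ℤ) + 1) - Gf n ((k : ℕ) : ℤ) else 0) = 0 := by
        apply Finset.sum_eq_zero; intro r _
        rw [if_neg (by have := r.isLt; omega)]
      rw [hz]
      have h4 : ((k : ℕ) : ℤ) + 1 = (n : ℤ) := by omega
      have h5 : ((k : ℕ) : ℤ) = (n : ℤ) - 1 := by omega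
      rw [h4, h5, Gf_top n hn0, sub_self]
  rw [hS2]
  have := Gf_rec n hn0 ((k : ℕ) : ℤ)
  linarith [this]

/-- in the unweighted case, `f_i` is an eigenvector of `K` with eigenvalue
`1 - (1 - cos(π/n))/(n-1)`. -/
theorem fvec_eigenvector (n : ℕ) (hn : 2 ≤ n) (p : Fin n → Fin n → ℝ)
    (hp : ∀ i j : Fin n, i ≠ j → p i j = 1 / 2) (i : Fin n) :
    (Kmat n p).mulVec (fvec n i) =
      (1 - (1 - Real.cos (Real.pi / n)) / ((n : ℝ) - 1)) • fvec n i := by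
  classical
  have hn2R : (2 : ℝ) ≤ (n : ℝ) := by exact_mod_cast hn
  have hnR : (n : ℝ) - 1 ≠ 0 := by linarith
  have hfx : ∀ y : Equiv.Perm (Fin n), fvec n i y = Gf n ((y.symm i : ℕ) : ℤ) := by
    intro y; unfold fvec Gf; congr 1; push_cast; ring
  funext x
  set k : Fin n := x.symm i with hk
  simp only [Matrix.mulVec, dotProduct, Pi.smul_apply, smul_eq_mul]
  rw [← Finset.add_sum_erase Finset.univ _ (Finset.mem_univ x)]
  have hKxx : Kmat n p x x = 1 - ∑ z ∈ Finset.univ.erase x, Koff n p x z := by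
    unfold Kmat; simp
  have hKxy : ∀ y ∈ Finset.univ.erase x, Kmat n p x y * fvec n i y = Koff n p x y * fvec n i y := by
    intro y hy
    unfold Kmat
    rw [Matrix.of_apply, if_neg (fun h => (Finset.mem_erase.mp hy).1 h.symm)]
  rw [hKxx, Finset.sum_congr rfl hKxy]
  -- main off-diagonal computation
  have hoff : ∑ y : Equiv.Perm (Fin n), Koff n p x y * (fvec n i y - fvec n i x)
      = (1 / 2) / ((n : ℝ) - 1) * ((2 * Real.cos (Real.pi / n) - 2) * Gf n ((k : ℕ) : ℤ)) := by
    unfold Koff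
    rw [Finset.sum_congr rfl (fun y _ => Finset.sum_mul _ _ _), Finset.sum_comm]
    have hin : ∀ r : Fin n,
        (∑ y : Equiv.Perm (Fin n),
          (if 1 ≤ (r : ℕ) ∧
              y = x * Equiv.swap (⟨(r : ℕ) - 1, Nat.lt_of_le_of_lt (Nat.sub_le _ _) r.isLt⟩ : Fin n) r
            then p (x r) (x ⟨(r : ℕ) - 1, Nat.lt_of_le_of_lt (Nat.sub_le _ _) r.isLt⟩) / ((n : ℝ) - 1)
            else 0) * (fvec n i y - fvec n i x))
        = (1 / 2) / ((n : ℝ) - 1) * (if 1 ≤ (r : ℕ) then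
            Gf n (((Equiv.swap (⟨(r : ℕ) - 1, Nat.lt_of_le_of_lt (Nat.sub_le _ _) r.isLt⟩ : Fin n) r k : Fin n) : ℕ) : ℤ)
              - Gf n ((k : ℕ) : ℤ)
          else 0) := by
      intro r
      set r' : Fin n := ⟨(r : ℕ) - 1, Nat.lt_of_le_of_lt (Nat.sub_le _ _) r.isLt⟩ with hr'
      by_cases hr1 : 1 ≤ (r : ℕ)
      · have hne : r ≠ r' := by
          intro h; rw [Fin.ext_iff] at h; simp only [hr'] at h; omega
        have hpval : p (x r) (x r') = 1 / 2 := hp _ _ (fun h => hne (x.injective h))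
        have hsymm : (x * Equiv.swap r' r).symm i = Equiv.swap r' r k := by
          rw [hk, Equiv.Perm.mul_def, Equiv.symm_trans_apply, Equiv.symm_swap]
        rw [if_pos hr1]
        have hterm : ∀ y : Equiv.Perm (Fin n),
            (if 1 ≤ (r : ℕ) ∧ y = x * Equiv.swap r' r
              then p (x r) (x r') / ((n : ℝ) - 1) else 0) * (fvec n i y - fvec n i x)
            = (if y = x * Equiv.swap r' r
              then (1 / 2) / ((n : ℝ) - 1) * (fvec n i y - fvec n i x) else 0) := by
          intro y
          by_cases hy : y = x * Equiv.swap r' r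
          · rw [if_pos ⟨hr1, hy⟩, if_pos hy, hpval]
          · rw [if_neg (fun h => hy h.2), if_neg hy, zero_mul]
        rw [Finset.sum_congr rfl (fun y _ => hterm y), Finset.sum_ite_eq' Finset.univ]
        rw [if_pos (Finset.mem_univ _)]
        rw [hfx (x * Equiv.swap r' r), hfx x, hsymm, ← hk]
      · rw [if_neg hr1, mul_zero]
        apply Finset.sum_eq_zero
        intro y _
        rw [if_neg (fun h => hr1 h.1), zero_mul]
    rw [Finset.sum_congr rfl (fun r _ => hin r), ← Finset.mul_sum, key_sum n hn k]
  have hoff' : ∑ y ∈ Finset.univ.erase x, Koff n p x y * fvec n i y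
      - (∑ z ∈ Finset.univ.erase x, Koff n p x z) * fvec n i x
      = (1 / 2) / ((n : ℝ) - 1) * ((2 * Real.cos (Real.pi / n) - 2) * Gf n ((k : ℕ) : ℤ)) := by
    rw [Finset.sum_mul, ← Finset.sum_sub_distrib]
    rw [Finset.sum_congr rfl (fun y _ => (mul_sub (Koff n p x y) (fvec n i y) (fvec n i x)).symm)]
    rw [Finset.sum_erase _ (by rw [sub_self, mul_zero])]
    exact hoff
  have hfxk : fvec n i x = Gf n ((k : ℕ) : ℤ) := by rw [hfx x, ← hk]
  have expand : (1 - ∑ z ∈ Finset.univ.erase x, Koff n p x z) * fvec n i x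
      + ∑ y ∈ Finset.univ.erase x, Koff n p x y * fvec n i y
      = fvec n i x + (∑ y ∈ Finset.univ.erase x, Koff n p x y * fvec n i y
          - (∑ z ∈ Finset.univ.erase x, Koff n p x z) * fvec n i x) := by ring
  rw [expand, hoff', hfxk]
  field_simp
  ring
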